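/- (An explicit persistently exciting signal in ℓ², Remark 3.3) Let X = ℓ²(ℕ,ℝ) be the real Hilbert space of square-summable real sequences. Define g : [0,∞) → X by g(τ) = (sin((k+1)τ)/(k+1)²)_{k∈ℕ} and P : X → X by (Px)_k = x_k/(k+1)². Then g(τ) indeed lies in ℓ² for every τ, g is continuous, P is a bounded linear operator, and g is PE with respect to P with constants (2π, π), i.e. for all t ≥ 0 and all x ∈ ℓ²(ℕ,ℝ), ∫_t^{t+2π} (Σ_{k∈ℕ} sin((k+1)τ)·x_k/(k+1)²)² dτ ≥ π · Σ_{k∈ℕ} x_k²/(k+1)⁴. -/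

import Mathlib

open Set

open MeasureTheory Real Set
open scoped ENNReal

noncomputable section LpPEAux

private lemma summable_base : Summable (fun k : ℕ => 1/((k:ℝ)+1)^2) := by
  have h := (summable_one_div_nat_pow (p := 2)).mpr one_lt_two
  have := (summable_nat_add_iff 1).mpr h
  simpa [Nat.cast_add] using this

private lemma memℓp_of_le {f h : ℕ → ℝ} (hh : Summable (fun k => (h k)^2))
    (hb : ∀ k, |f k| ≤ |h k|) : Memℓp f 2 := by
  apply memℓp_gen
  have h2 : ((2:ℝ≥0∞)).toReal = ((2:ℕ):ℝ) := by norm_num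
  rw [h2]
  simp_rw [Real.rpow_natCast]
  refine hh.of_nonneg_of_le (fun k => by positivity) (fun k => ?_)
  rw [Real.norm_eq_abs, ← sq_abs (h k)]
  exact pow_le_pow_left₀ (abs_nonneg _) (hb k) 2

private lemma summable_base_sq : Summable (fun k : ℕ => (1/((k:ℝ)+1)^2)^2) := by
  refine summable_base.of_nonneg_of_le (fun k => by positivity) (fun k => ?_)
  have h1 : (1:ℝ) ≤ ((k:ℝ)+1)^2 := by nlinarith [Nat.cast_nonneg (α := ℝ) k]
  rw [div_pow, one_pow]
  apply div_le_div_of_nonneg_left one_pos.le (by positivity)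
  nlinarith

private lemma summable_sq (x : lp (fun _ : ℕ => ℝ) 2) : Summable (fun k => (x k)^2) := by
  have := (lp.memℓp x).summable (p := 2) (by norm_num)
  have h2 : ((2:ℝ≥0∞)).toReal = ((2:ℕ):ℝ) := by norm_num
  rw [h2] at this
  simp_rw [Real.rpow_natCast, Real.norm_eq_abs, sq_abs] at this
  exact this

private lemma norm_sq_eq (x : lp (fun _ : ℕ => ℝ) 2) : ‖x‖^2 = ∑' k, (x k)^2 := by
  rw [← real_inner_self_eq_norm_sq, lp.inner_eq_tsum]
  exact tsum_congr fun k => by simp [RCLike.inner_apply, sq]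

private lemma inner_eq (f x : lp (fun _ : ℕ => ℝ) 2) :
    (inner ℝ f x : ℝ) = ∑' k, f k * x k := by
  rw [lp.inner_eq_tsum]
  exact tsum_congr fun k => by simp [RCLike.inner_apply, mul_comm]

private lemma gmem (τ : ℝ) :
    Memℓp (fun k : ℕ => Real.sin (((k:ℝ)+1)*τ)/((k:ℝ)+1)^2) 2 := by
  refine memℓp_of_le summable_base_sq (fun k => ?_)
  rw [abs_div, abs_div, abs_one, abs_of_pos (show (0:ℝ) < ((k:ℝ)+1)^2 by positivity)]
  gcongr
  exact Real.abs_sin_le_one _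


private def gsig : ℝ → lp (fun _ : ℕ => ℝ) 2 :=
  fun τ => ⟨fun k : ℕ => Real.sin (((k:ℝ)+1)*τ)/((k:ℝ)+1)^2, gmem τ⟩

@[simp] private lemma gsig_apply (τ : ℝ) (k : ℕ) :
    gsig τ k = Real.sin (((k:ℝ)+1)*τ)/((k:ℝ)+1)^2 := rfl

private lemma Pmem (x : lp (fun _ : ℕ => ℝ) 2) :
    Memℓp (fun k : ℕ => x k / ((k:ℝ)+1)^2) 2 := by
  refine memℓp_of_le (summable_sq x) (fun k => ?_)
  rw [abs_div]
  exact div_le_self (abs_nonneg _) (by nlinarith [Nat.cast_nonneg (α := ℝ) k, abs_of_pos (show (0:ℝ) < ((k:ℝ)+1)^2 by positivity)])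

private def Pl : lp (fun _ : ℕ => ℝ) 2 →ₗ[ℝ] lp (fun _ : ℕ => ℝ) 2 where
  toFun x := ⟨fun k : ℕ => x k / ((k:ℝ)+1)^2, Pmem x⟩
  map_add' x y := by
    apply lp.ext; funext k
    change ((x + y) k) / _ = (x k / _) + (y k / _)
    rw [lp.coeFn_add]; simp [add_div]
  map_smul' r x := by
    apply lp.ext; funext k
    change ((r • x) k) / _ = r • (x k / _)
    rw [lp.coeFn_smul]; simp [mul_div_assoc]

@[simp] private lemma Pl_apply (x : lp (fun _ : ℕ => ℝ) 2) (k : ℕ) :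
    Pl x k = x k / ((k:ℝ)+1)^2 := rfl

private lemma sq_le_imp {a b : ℝ} (ha : 0 ≤ a) (hb : 0 ≤ b) (h : a^2 ≤ b^2) : a ≤ b := by
  nlinarith

private lemma Pl_bound (x : lp (fun _ : ℕ => ℝ) 2) : ‖Pl x‖ ≤ 1 * ‖x‖ := by
  rw [one_mul]
  refine sq_le_imp (norm_nonneg _) (norm_nonneg _) ?_
  rw [norm_sq_eq, norm_sq_eq]
  refine Summable.tsum_le_tsum (fun k => ?_) (summable_sq _) (summable_sq _)
  rw [Pl_apply, div_pow]
  exact div_le_self (sq_nonneg _) (by nlinarith [Nat.cast_nonneg (α := ℝ) k, sq_nonneg ((k:ℝ)+1), sq_nonneg (((k:ℝ)+1)^2 - 1)])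

private def Pc : lp (fun _ : ℕ => ℝ) 2 →L[ℝ] lp (fun _ : ℕ => ℝ) 2 :=
  Pl.mkContinuous 1 Pl_bound

@[simp] private lemma Pc_apply (x : lp (fun _ : ℕ => ℝ) 2) (k : ℕ) :
    Pc x k = x k / ((k:ℝ)+1)^2 := rfl

private lemma gsig_cont : Continuous gsig := by
  set C : ℝ := Real.sqrt (∑' k : ℕ, 1/((k:ℝ)+1)^2) with hC
  have hC0 : 0 ≤ C := Real.sqrt_nonneg _
  refine (LipschitzWith.of_dist_le_mul (K := ⟨C, hC0⟩) (fun τ σ => ?_)).continuous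
  rw [dist_eq_norm, Real.dist_eq]
  have key : ‖gsig τ - gsig σ‖^2 ≤ (C * |τ - σ|)^2 := by
    rw [norm_sq_eq]
    have hterm : ∀ k : ℕ, ((gsig τ - gsig σ) k)^2 ≤ (τ-σ)^2 * (1/((k:ℝ)+1)^2) := by
      intro k
      have hco : (gsig τ - gsig σ) k = gsig τ k - gsig σ k := by
        rw [lp.coeFn_sub]; rfl
      rw [hco, gsig_apply, gsig_apply, div_sub_div_same, div_pow]
      have hsin : |Real.sin (((k:ℝ)+1)*τ) - Real.sin (((k:ℝ)+1)*σ)| ≤ ((k:ℝ)+1) * |τ - σ| := by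
        set a := ((k:ℝ)+1)*τ; set b := ((k:ℝ)+1)*σ
        have h2 : |Real.sin a - Real.sin b| ≤ |a - b| := by
          rw [Real.sin_sub_sin]
          calc |2 * Real.sin ((a-b)/2) * Real.cos ((a+b)/2)|
              = 2 * |Real.sin ((a-b)/2)| * |Real.cos ((a+b)/2)| := by
                rw [abs_mul, abs_mul]; norm_num
            _ ≤ 2 * |(a-b)/2| * 1 :=
                mul_le_mul (mul_le_mul_of_nonneg_left Real.abs_sin_le_abs (by norm_num))
                  (Real.abs_cos_le_one _) (abs_nonneg _) (by positivity)
            _ = |a - b| := by rw [abs_div, mul_one, abs_two]; ring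
        calc |Real.sin a - Real.sin b| ≤ |a - b| := h2
          _ = ((k:ℝ)+1) * |τ - σ| := by
              rw [← mul_sub, abs_mul, abs_of_nonneg (show (0:ℝ) ≤ (k:ℝ)+1 by positivity)]
      have h1 : (Real.sin (((k:ℝ)+1)*τ) - Real.sin (((k:ℝ)+1)*σ))^2
          ≤ (((k:ℝ)+1) * |τ - σ|)^2 := by
        rw [← sq_abs]
        exact pow_le_pow_left₀ (abs_nonneg _) hsin 2
      have hd : (0:ℝ) < (((k:ℝ)+1)^2)^2 := by positivity
      rw [div_le_iff₀ hd]
      calc (Real.sin (((k:ℝ)+1)*τ) - Real.sin (((k:ℝ)+1)*σ))^2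
          ≤ (((k:ℝ)+1) * |τ - σ|)^2 := h1
        _ = (τ-σ)^2 * (1/((k:ℝ)+1)^2) * (((k:ℝ)+1)^2)^2 := by
            rw [mul_pow, sq_abs]; field_simp
    calc (∑' k, ((gsig τ - gsig σ) k)^2)
        ≤ ∑' k : ℕ, (τ-σ)^2 * (1/((k:ℝ)+1)^2) :=
          Summable.tsum_le_tsum hterm (summable_sq _) (summable_base.mul_left _)
      _ = (τ-σ)^2 * ∑' k : ℕ, 1/((k:ℝ)+1)^2 := tsum_mul_left
      _ = (C * |τ - σ|)^2 := by
          rw [mul_pow, hC, Real.sq_sqrt (tsum_nonneg (fun k => by positivity)), sq_abs]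
          ring
  have := sq_le_imp (norm_nonneg _) (by positivity) key
  exact this

private lemma integral_cos_int (z : ℤ) (t : ℝ) :
    (∫ τ in t..(t + 2*π), Real.cos ((z:ℝ)*τ)) = if z = 0 then 2*π else 0 := by
  rcases eq_or_ne z 0 with hz | hz
  · rw [if_pos hz, hz]
    simp
  · rw [if_neg hz]
    have hz' : ((z:ℝ)) ≠ 0 := Int.cast_ne_zero.mpr hz
    have hd : ∀ τ : ℝ, HasDerivAt (fun u => Real.sin ((z:ℝ)*u)/(z:ℝ)) (Real.cos ((z:ℝ)*τ)) τ := by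
      intro τ
      have h1 : HasDerivAt (fun u : ℝ => (z:ℝ)*u) ((z:ℝ)) τ := by
        simpa using (hasDerivAt_id τ).const_mul (z:ℝ)
      have h2 := (Real.hasDerivAt_sin ((z:ℝ)*τ)).comp τ h1
      have h3 := h2.div_const (z:ℝ)
      simpa [Function.comp, mul_div_assoc, div_self hz'] using h3
    rw [intervalIntegral.integral_eq_sub_of_hasDerivAt (fun τ _ => hd τ)
      ((Real.continuous_cos.comp (continuous_const.mul continuous_id)).intervalIntegrable _ _)]
    have heq : Real.sin ((z:ℝ)*(t+2*π)) = Real.sin ((z:ℝ)*t) := by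
      have h4 := Real.sin_add_int_mul_two_pi ((z:ℝ)*t) z
      rw [← h4]; ring_nf
    rw [heq]; simp

private lemma integral_sin_mul_sin (m n : ℕ) (t : ℝ) :
    (∫ τ in t..(t + 2*π), Real.sin (((m:ℝ)+1)*τ) * Real.sin (((n:ℝ)+1)*τ))
      = if m = n then π else 0 := by
  have hid : ∀ τ : ℝ, Real.sin (((m:ℝ)+1)*τ) * Real.sin (((n:ℝ)+1)*τ)
      = (Real.cos (((((m:ℤ)-(n:ℤ)):ℤ):ℝ)*τ) - Real.cos (((((m:ℤ)+(n:ℤ)+2):ℤ):ℝ)*τ))/2 := by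
    intro τ
    have e1 : (((((m:ℤ)-(n:ℤ)):ℤ):ℝ))*τ = ((m:ℝ)+1)*τ - ((n:ℝ)+1)*τ := by push_cast; ring
    have e2 : (((((m:ℤ)+(n:ℤ)+2):ℤ):ℝ))*τ = ((m:ℝ)+1)*τ + ((n:ℝ)+1)*τ := by push_cast; ring
    rw [e1, e2, Real.cos_sub, Real.cos_add]; ring
  simp_rw [hid]
  have c1 : Continuous fun τ : ℝ => Real.cos (((((m:ℤ)-(n:ℤ)):ℤ):ℝ)*τ) :=
    Real.continuous_cos.comp (continuous_const.mul continuous_id)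
  have c2 : Continuous fun τ : ℝ => Real.cos (((((m:ℤ)+(n:ℤ)+2):ℤ):ℝ)*τ) :=
    Real.continuous_cos.comp (continuous_const.mul continuous_id)
  rw [intervalIntegral.integral_div, intervalIntegral.integral_sub
    (c1.intervalIntegrable _ _) (c2.intervalIntegrable _ _),
    integral_cos_int, integral_cos_int]
  have hne : ((m:ℤ)+(n:ℤ)+2) ≠ 0 := by positivity
  rw [if_neg hne]
  rcases eq_or_ne m n with h | h
  · rw [if_pos h, if_pos (by omega)]
    ring
  · rw [if_neg h, if_neg (by omega)]
    ring

set_option maxHeartbeats 1000000 in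
private lemma key (x : lp (fun _ : ℕ => ℝ) 2) (t : ℝ) :
    (∫ τ in t..(t + 2*π), (∑' k : ℕ, (x k / ((k:ℝ)+1)^2) * Real.sin (((k:ℝ)+1)*τ))^2)
      = π * ∑' k : ℕ, (x k / ((k:ℝ)+1)^2)^2 := by
  set c : ℕ → ℝ := fun k => x k / ((k:ℝ)+1)^2 with hc
  set s : ℕ → ℝ → ℝ := fun k τ => Real.sin (((k:ℝ)+1)*τ) with hs
  have hcb : ∀ k, |c k| ≤ ‖x‖ * (1/((k:ℝ)+1)^2) := by
    intro k
    rw [hc]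
    simp only
    rw [abs_div, abs_of_pos (show (0:ℝ) < ((k:ℝ)+1)^2 by positivity), div_eq_mul_one_div]
    exact mul_le_mul_of_nonneg_right (by
      simpa using lp.norm_apply_le_norm (p := 2) two_ne_zero x k) (by positivity)
  have habs : Summable (fun k => |c k|) :=
    Summable.of_nonneg_of_le (fun k => abs_nonneg _) hcb (summable_base.mul_left _)
  have hsb : ∀ k τ, |s k τ| ≤ 1 := fun k τ => Real.abs_sin_le_one _
  have hu : ∀ τ, Summable (fun k => c k * s k τ) := by
    intro τ
    refine Summable.of_abs (Summable.of_nonneg_of_le (fun k => abs_nonneg _) (fun k => ?_) habs)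
    rw [abs_mul]
    exact mul_le_of_le_one_right (abs_nonneg _) (hsb k τ)
  have habs2 : Summable (fun p : ℕ×ℕ => |c p.1| * |c p.2|) :=
    habs.mul_of_nonneg habs (fun k => abs_nonneg _) (fun k => abs_nonneg _)
  have hvb : ∀ (p : ℕ×ℕ) (τ : ℝ), |(c p.1 * s p.1 τ) * (c p.2 * s p.2 τ)| ≤ |c p.1| * |c p.2| := by
    intro p τ
    rw [abs_mul, abs_mul, abs_mul]
    calc |c p.1| * |s p.1 τ| * (|c p.2| * |s p.2 τ|)
        ≤ |c p.1| * 1 * (|c p.2| * 1) :=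
          mul_le_mul (mul_le_mul_of_nonneg_left (hsb _ _) (abs_nonneg _))
            (mul_le_mul_of_nonneg_left (hsb _ _) (abs_nonneg _))
            (by positivity) (by positivity)
      _ = |c p.1| * |c p.2| := by ring
  have hP : ∀ τ, Summable (fun p : ℕ×ℕ => (c p.1 * s p.1 τ) * (c p.2 * s p.2 τ)) := fun τ =>
    Summable.of_abs (Summable.of_nonneg_of_le (fun p => abs_nonneg _) (fun p => hvb p τ) habs2)
  have hpt : ∀ τ, (∑' k, c k * s k τ)^2
      = ∑' p : ℕ×ℕ, (c p.1 * s p.1 τ) * (c p.2 * s p.2 τ) := by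
    intro τ
    have h1 : (∑' p : ℕ×ℕ, (c p.1 * s p.1 τ) * (c p.2 * s p.2 τ))
        = ∑' (j : ℕ) (k : ℕ), (c j * s j τ) * (c k * s k τ) :=
      (hP τ).tsum_prod' (fun j => (hu τ).mul_left (c j * s j τ))
    calc (∑' k, c k * s k τ)^2 = (∑' k, c k * s k τ) * (∑' k, c k * s k τ) := sq _
      _ = ∑' j, (c j * s j τ) * (∑' k, c k * s k τ) := tsum_mul_right.symm
      _ = ∑' (j : ℕ) (k : ℕ), (c j * s j τ) * (c k * s k τ) :=
          tsum_congr fun j => tsum_mul_left.symm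
      _ = ∑' p : ℕ×ℕ, (c p.1 * s p.1 τ) * (c p.2 * s p.2 τ) := h1.symm
  have hle : t ≤ t + 2*π := by linarith [Real.pi_pos]
  have hvc : ∀ p : ℕ×ℕ, Continuous (fun τ => (c p.1 * s p.1 τ) * (c p.2 * s p.2 τ)) := by
    intro p
    apply Continuous.mul <;>
      exact continuous_const.mul (Real.continuous_sin.comp (continuous_const.mul continuous_id))
  have hint : ∀ p : ℕ×ℕ, MeasureTheory.Integrable
      (fun τ => (c p.1 * s p.1 τ) * (c p.2 * s p.2 τ)) (volume.restrict (Ioc t (t+2*π))) :=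
    fun p => (hvc p).integrableOn_Ioc
  have hnorm : Summable (fun p : ℕ×ℕ =>
      ∫ τ in Ioc t (t+2*π), ‖(c p.1 * s p.1 τ) * (c p.2 * s p.2 τ)‖) := by
    refine Summable.of_nonneg_of_le
      (fun p => MeasureTheory.integral_nonneg fun τ => norm_nonneg _) (fun p => ?_)
      (habs2.mul_left (2*π))
    calc (∫ τ in Ioc t (t+2*π), ‖(c p.1 * s p.1 τ) * (c p.2 * s p.2 τ)‖)
        ≤ ∫ _ in Ioc t (t+2*π), |c p.1| * |c p.2| := by
          refine MeasureTheory.setIntegral_mono_on ((hint p).norm)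
            (MeasureTheory.integrableOn_const (by
              rw [Real.volume_Ioc]; exact ENNReal.ofReal_ne_top))
            measurableSet_Ioc (fun τ _ => hvb p τ)
      _ = 2*π * (|c p.1| * |c p.2|) := by
          rw [MeasureTheory.setIntegral_const, Real.volume_real_Ioc_of_le hle, add_sub_cancel_left,
            smul_eq_mul]
  have swap := MeasureTheory.integral_tsum_of_summable_integral_norm hint hnorm
  rw [intervalIntegral.integral_of_le hle]
  have hcongr : (∫ τ in Ioc t (t+2*π), (∑' k, c k * s k τ)^2)
      = ∫ τ in Ioc t (t+2*π), ∑' p : ℕ×ℕ, (c p.1 * s p.1 τ) * (c p.2 * s p.2 τ) := by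
    exact MeasureTheory.integral_congr_ae (Filter.Eventually.of_forall fun τ => hpt τ)
  rw [hcongr, ← swap]
  have hIv : ∀ p : ℕ×ℕ, (∫ τ in Ioc t (t+2*π), (c p.1 * s p.1 τ) * (c p.2 * s p.2 τ))
      = if p.1 = p.2 then (c p.1 * c p.2) * π else 0 := by
    intro p
    rw [← intervalIntegral.integral_of_le hle]
    have hrw : ∀ τ, (c p.1 * s p.1 τ) * (c p.2 * s p.2 τ)
        = (c p.1 * c p.2) * (s p.1 τ * s p.2 τ) := fun τ => by ring
    simp_rw [hrw, hs]
    rw [intervalIntegral.integral_const_mul, integral_sin_mul_sin]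
    split_ifs with h
    · rfl
    · exact mul_zero _
  calc (∑' p : ℕ×ℕ, ∫ τ in Ioc t (t+2*π), (c p.1 * s p.1 τ) * (c p.2 * s p.2 τ))
      = ∑' p : ℕ×ℕ, (if p.1 = p.2 then (c p.1 * c p.2) * π else 0) := tsum_congr hIv
    _ = ∑' k : ℕ, (c k * c k) * π := by
        have hinj : Function.Injective (fun k : ℕ => ((k, k) : ℕ×ℕ)) := by
          intro a b h
          exact congrArg Prod.fst h
        have hsupp : Function.support
            (fun p : ℕ×ℕ => if p.1 = p.2 then (c p.1 * c p.2) * π else 0)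
            ⊆ Set.range (fun k : ℕ => ((k, k) : ℕ×ℕ)) := by
          intro p hp
          by_cases h : p.1 = p.2
          · exact ⟨p.1, by rw [Prod.ext_iff]; exact ⟨rfl, h⟩⟩
          · exact absurd (if_neg h) hp
        rw [← Function.Injective.tsum_eq hinj hsupp]
        simp
    _ = π * ∑' k : ℕ, (c k)^2 := by
        rw [← tsum_mul_left]
        exact tsum_congr fun k => by ring

private lemma main_ineq (x : lp (fun _ : ℕ => ℝ) 2) (t : ℝ) :
    Real.pi * ‖Pc x‖ ^ 2 ≤ ∫ τ in t..(t + 2 * Real.pi), (inner ℝ (gsig τ) x : ℝ) ^ 2 := by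
  have hinner : ∀ τ : ℝ, (inner ℝ (gsig τ) x : ℝ)
      = ∑' k : ℕ, (x k / ((k:ℝ)+1)^2) * Real.sin (((k:ℝ)+1)*τ) := by
    intro τ
    rw [inner_eq]
    exact tsum_congr fun k => by rw [gsig_apply]; ring
  have hnorm : ‖Pc x‖^2 = ∑' k : ℕ, (x k / ((k:ℝ)+1)^2)^2 := by
    rw [norm_sq_eq]
    exact tsum_congr fun k => by rw [Pc_apply]
  refine le_of_eq ?_
  calc π * ‖Pc x‖^2 = π * ∑' k : ℕ, (x k/((k:ℝ)+1)^2)^2 := by rw [hnorm]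
    _ = ∫ τ in t..(t+2*π), (∑' k : ℕ, (x k/((k:ℝ)+1)^2) * Real.sin (((k:ℝ)+1)*τ))^2 :=
        (key x t).symm
    _ = ∫ τ in t..(t+2*π), (inner ℝ (gsig τ) x : ℝ)^2 := by
        simp_rw [hinner]

end LpPEAux

open Set

/-- **An explicit persistently exciting signal in ℓ²** (Remark 3.3).
In `X = ℓ²(ℕ, ℝ)`, the signal `g(τ) = (sin((k+1)τ)/(k+1)²)_{k∈ℕ}` is well defined (lies in
`ℓ²`), continuous, the map `P` given coordinatewise by `(Px)_k = x_k/(k+1)²` is a bounded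
linear operator, and `g` is PE with respect to `P` with constants `(2π, π)`:
`∫_t^{t+2π} ⟨g(τ), x⟩² dτ ≥ π ‖P x‖²` for all `t ≥ 0` and `x ∈ ℓ²(ℕ, ℝ)`. -/
theorem lp_pe_example :
    ∃ (g : ℝ → lp (fun _ : ℕ => ℝ) 2) (P : lp (fun _ : ℕ => ℝ) 2 →L[ℝ] lp (fun _ : ℕ => ℝ) 2),
      (∀ (τ : ℝ) (k : ℕ), g τ k = Real.sin ((k + 1) * τ) / (k + 1) ^ 2) ∧
      (∀ (x : lp (fun _ : ℕ => ℝ) 2) (k : ℕ), P x k = x k / (k + 1) ^ 2) ∧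
      Continuous g ∧
      ∀ (x : lp (fun _ : ℕ => ℝ) 2) (t : ℝ), 0 ≤ t →
        Real.pi * ‖P x‖ ^ 2 ≤
          ∫ τ in t..(t + 2 * Real.pi), (inner ℝ (g τ) x : ℝ) ^ 2 := by
  exact ⟨gsig, Pc, fun τ k => rfl, fun x k => rfl, gsig_cont, fun x t _ => main_ineq x t⟩
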